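/- Let ℓ > 0, X = X(ℓ), let f be holomorphic on the strip S = { z ∈ ℂ : |Re z| < X } with f(z+2πi) = f(z) and with ∫∫ |f(s+iθ)| dθ ds < ∞, and let ξ : (−X, X) → ℝ be continuously differentiable with ξ′ compactly supported in (−X,X) and ∫_{−X}^{X} ξ′(s) ds = 1. Then the L²-pairing of the quadratic differentials Υ = f·dz² and K = −i·ξ′(s)·ρ_ℓ(s)²·dz², namely 4·∫_{−X}^{X} ∫₀^{2π} f(s+iθ) · conj( −i·ξ′(s)·ρ_ℓ(s)² ) · ρ_ℓ(s)^{−2} dθ ds, equals 8π·i·b₀(f), where b₀(f) = (1/2π)∫₀^{2π} f(s+iθ) dθ is the (s-independent) mean of f over vertical circles. -/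

import Mathlib

open Real MeasureTheory Complex

/-- Half-width (in the coordinate `s`) of the standard hyperbolic collar around a simple
closed geodesic of length `ℓ`. -/
noncomputable def collarX (ℓ : ℝ) : ℝ :=
  (2 * Real.pi / ℓ) * (Real.pi / 2 - Real.arctan (Real.sinh (ℓ / 2)))

/-- Conformal factor of the standard hyperbolic collar metric `ρ_ℓ(s)²(ds² + dθ²)`. -/
noncomputable def collarRho (ℓ s : ℝ) : ℝ :=
  ℓ / (2 * Real.pi * Real.cos (ℓ * s / (2 * Real.pi)))

lemma mean_const (ℓ : ℝ) (f : ℂ → ℂ)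
    (hf : DifferentiableOn ℂ f {z : ℂ | |z.re| < collarX ℓ})
    (hper : ∀ z ∈ {z : ℂ | |z.re| < collarX ℓ}, f (z + 2 * Real.pi * Complex.I) = f z)
    (s : ℝ) (hs : |s| < collarX ℓ) :
    (∫ θ in (0:ℝ)..(2*Real.pi), f ((s:ℂ) + θ * Complex.I)) =
      ∫ θ in (0:ℝ)..(2*Real.pi), f ((0:ℂ) + θ * Complex.I) := by
  have hsub : ∀ x : ℝ, x ∈ Set.uIcc s 0 → |x| < collarX ℓ := by
    intro x hx
    rcases Set.mem_uIcc.1 hx with ⟨h1, h2⟩ | ⟨h1, h2⟩ <;>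
      · refine lt_of_le_of_lt ?_ hs
        rw [abs_le]
        constructor <;> nlinarith [le_abs_self s, neg_abs_le s]
  have key := Complex.integral_boundary_rect_eq_zero_of_differentiableOn f
    (s : ℂ) (2 * Real.pi * Complex.I) ?_
  · simp only [Complex.ofReal_re, Complex.ofReal_im, Complex.mul_re, Complex.mul_im,
      Complex.I_re, Complex.I_im, Complex.re_ofNat, Complex.im_ofNat] at key
    norm_num at key
    have hper' : (∫ x in s..(0:ℝ), f ((x:ℂ) + 2 * (Real.pi:ℂ) * Complex.I)) =
        ∫ x in s..(0:ℝ), f (x:ℂ) := by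
      refine intervalIntegral.integral_congr fun x hx => ?_
      exact hper (x : ℂ) (by simpa using hsub x hx)
    rw [hper'] at key
    have h0 : Complex.I * ((∫ θ in (0:ℝ)..(2*Real.pi), f ((θ:ℂ) * Complex.I)) -
        ∫ θ in (0:ℝ)..(2*Real.pi), f ((s:ℂ) + θ * Complex.I)) = 0 := by
      rw [mul_sub]; linear_combination key
    have h1 := (mul_eq_zero.1 h0).resolve_left Complex.I_ne_zero
    have h2 := sub_eq_zero.1 h1
    simp only [zero_add]
    exact h2.symm
  · refine hf.mono fun z hz => ?_
    rw [Complex.mem_reProdIm] at hz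
    simpa using hsub z.re (by simpa using hz.1)

/-- The L²-pairing of an integrable holomorphic quadratic differential `Υ = f·dz²` on the
standard collar with the Dehn-twist variation `K = −i ξ′(s) ρ_ℓ(s)² dz²` (where `ξ′` is
compactly supported in `(−X, X)` with `∫ ξ′ = 1`) equals `8πi·b₀(f)`, where
`b₀(f) = (1/2π)∫₀^{2π} f(s+iθ) dθ` is the (s-independent) mean of `f` over vertical
circles. -/
theorem dehn_twist_pairing (ℓ : ℝ) (hℓ : 0 < ℓ) (f : ℂ → ℂ)
    (hf : DifferentiableOn ℂ f {z : ℂ | |z.re| < collarX ℓ})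
    (hper : ∀ z ∈ {z : ℂ | |z.re| < collarX ℓ}, f (z + 2 * Real.pi * Complex.I) = f z)
    (hint : (∫⁻ s in Set.Ioo (-collarX ℓ) (collarX ℓ), ∫⁻ θ in Set.Ioo 0 (2 * Real.pi),
      ENNReal.ofReal ‖f ((s : ℂ) + θ * Complex.I)‖) < ⊤)
    (ξ : ℝ → ℝ) (hξ : ContDiff ℝ 1 ξ)
    (hsupp : HasCompactSupport (deriv ξ))
    (hsupp' : Function.support (deriv ξ) ⊆ Set.Ioo (-collarX ℓ) (collarX ℓ))
    (hξint : (∫ s in (-collarX ℓ)..(collarX ℓ), deriv ξ s) = 1) :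
    (4 : ℂ) * ∫ s in (-collarX ℓ)..(collarX ℓ), ∫ θ in (0 : ℝ)..(2 * Real.pi),
        f ((s : ℂ) + θ * Complex.I) *
          (starRingEnd ℂ) (-Complex.I * Complex.ofReal (deriv ξ s) * Complex.ofReal (collarRho ℓ s) ^ 2) *
          (Complex.ofReal (collarRho ℓ s) ^ 2)⁻¹ =
      8 * Real.pi * Complex.I * ((1 / (2 * Real.pi) : ℂ) *
        ∫ θ in (0 : ℝ)..(2 * Real.pi), f ((0 : ℂ) + θ * Complex.I)) := by
  have hπ : (0:ℝ) < Real.pi := Real.pi_pos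
  set b0 : ℂ := ∫ θ in (0 : ℝ)..(2 * Real.pi), f ((0 : ℂ) + θ * Complex.I) with hb0
  have harct : 0 < Real.arctan (Real.sinh (ℓ / 2)) := by
    have := Real.arctan_strictMono (show (0:ℝ) < Real.sinh (ℓ / 2) from
      Real.sinh_pos_iff.2 (by linarith))
    simpa [Real.arctan_zero] using this
  have hXval : ℓ * collarX ℓ / (2 * Real.pi) =
      Real.pi / 2 - Real.arctan (Real.sinh (ℓ / 2)) := by
    unfold collarX; field_simp
  -- inner integral computation
  have hinner : ∀ s : ℝ,
      (∫ θ in (0 : ℝ)..(2 * Real.pi),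
        f ((s : ℂ) + θ * Complex.I) *
          (starRingEnd ℂ) (-Complex.I * Complex.ofReal (deriv ξ s) * Complex.ofReal (collarRho ℓ s) ^ 2) *
          (Complex.ofReal (collarRho ℓ s) ^ 2)⁻¹) =
      (Complex.ofReal (deriv ξ s)) * (Complex.I * b0) := by
    intro s
    by_cases hd : deriv ξ s = (0:ℝ)
    · simp [hd]
    · have hsIoo : s ∈ Set.Ioo (-collarX ℓ) (collarX ℓ) := hsupp' (by simpa using hd)
      have hsX : |s| < collarX ℓ := abs_lt.2 ⟨by linarith [hsIoo.1], hsIoo.2⟩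
      have hcos : 0 < Real.cos (ℓ * s / (2 * Real.pi)) := by
        have habs : |ℓ * s / (2 * Real.pi)| < Real.pi / 2 := by
          rw [abs_div, abs_mul, abs_of_pos hℓ,
            abs_of_pos (by linarith : (0:ℝ) < 2 * Real.pi)]
          calc ℓ * |s| / (2 * Real.pi) < ℓ * collarX ℓ / (2 * Real.pi) := by gcongr
            _ = Real.pi / 2 - Real.arctan (Real.sinh (ℓ / 2)) := hXval
            _ < Real.pi / 2 := by linarith
        exact Real.cos_pos_of_mem_Ioo (Set.mem_Ioo.2 (abs_lt.1 habs))
      have hρ : (Complex.ofReal (collarRho ℓ s)) ^ 2 ≠ 0 := by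
        apply pow_ne_zero
        rw [Complex.ofReal_ne_zero]
        exact div_ne_zero (ne_of_gt hℓ) (by positivity)
      have hcongr : ∀ θ ∈ Set.uIcc (0:ℝ) (2 * Real.pi),
          f ((s : ℂ) + θ * Complex.I) *
            (starRingEnd ℂ) (-Complex.I * Complex.ofReal (deriv ξ s) * Complex.ofReal (collarRho ℓ s) ^ 2) *
            (Complex.ofReal (collarRho ℓ s) ^ 2)⁻¹ =
          (Complex.ofReal (deriv ξ s) * Complex.I) * f ((s : ℂ) + θ * Complex.I) := by
        intro θ _
        simp only [map_mul, map_neg, map_pow, Complex.conj_ofReal, Complex.conj_I]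
        linear_combination (f ((s : ℂ) + θ * Complex.I) * Complex.I * Complex.ofReal (deriv ξ s)) * mul_inv_cancel₀ hρ
      rw [intervalIntegral.integral_congr hcongr, intervalIntegral.integral_const_mul,
        mean_const ℓ f hf hper s hsX]
      ring
  calc (4 : ℂ) * ∫ s in (-collarX ℓ)..(collarX ℓ), ∫ θ in (0 : ℝ)..(2 * Real.pi),
        f ((s : ℂ) + θ * Complex.I) *
          (starRingEnd ℂ) (-Complex.I * Complex.ofReal (deriv ξ s) * Complex.ofReal (collarRho ℓ s) ^ 2) *
          (Complex.ofReal (collarRho ℓ s) ^ 2)⁻¹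
      = (4 : ℂ) * ∫ s in (-collarX ℓ)..(collarX ℓ), (Complex.ofReal (deriv ξ s)) * (Complex.I * b0) := by
        rw [intervalIntegral.integral_congr fun s _ => hinner s]
    _ = (4 : ℂ) * (((∫ s in (-collarX ℓ)..(collarX ℓ), deriv ξ s : ℝ) : ℂ)) * (Complex.I * b0) := by
        rw [intervalIntegral.integral_mul_const, intervalIntegral.integral_ofReal]; ring
    _ = 8 * Real.pi * Complex.I * ((1 / (2 * Real.pi) : ℂ)* b0) := by
        rw [hξint, Complex.ofReal_one]
        have : (Real.pi : ℂ) ≠ 0 := Complex.ofReal_ne_zero.2 (ne_of_gt hπ)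
        field_simp
        ring
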